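/- Cotangent identity for linear basis functions on a triangle: Let x_p, x_q, x_r ∈ ℝ² be affinely independent points forming a triangle T, and let φ_p (respectively φ_q) be the unique affine function ℝ² → ℝ equal to 1 at x_p and 0 at x_q and x_r (respectively equal to 1 at x_q and 0 at x_p and x_r). Let g_p and g_q denote the (constant) gradients of φ_p and φ_q, and let β_pq be the interior angle of T at the vertex x_r (the angle at x_r between the edges x_r x_p and x_r x_q; equivalently, cos β_pq = −n_p·n_q where n_p, n_q are the unit inward normals to the edges opposite x_p and x_q). Then area(T)·(g_p · g_q) = −(1/2)·cot(β_pq). -/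

import Mathlib

set_option maxHeartbeats 1000000 in
/-- Cotangent identity for the gradients of linear nodal basis functions on a
triangle: `area(T) * (g_p ⬝ g_q) = -(1/2) cot β_pq`, where `β_pq` is the
interior angle at the vertex `x_r`. -/
theorem triangle_basis_gradient_cot_identity
    (xp xq xr : EuclideanSpace ℝ (Fin 2))
    (hind : AffineIndependent ℝ ![xp, xq, xr])
    (φp φq : EuclideanSpace ℝ (Fin 2) → ℝ)
    (gp gq : EuclideanSpace ℝ (Fin 2)) (kp kq : ℝ)
    (hφp : ∀ y, φp y = (inner ℝ gp y : ℝ) + kp)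
    (hφq : ∀ y, φq y = (inner ℝ gq y : ℝ) + kq)
    (hpp : φp xp = 1) (hpq : φp xq = 0) (hpr : φp xr = 0)
    (hqq : φq xq = 1) (hqp : φq xp = 0) (hqr : φq xr = 0) :
    ((1 : ℝ)/2) * |(xq 0 - xp 0) * (xr 1 - xp 1) - (xq 1 - xp 1) * (xr 0 - xp 0)| *
        (inner ℝ gp gq : ℝ)
      = -(1/2) * Real.cot (EuclideanGeometry.angle xp xr xq) := by
  have inner2 : ∀ x y : EuclideanSpace ℝ (Fin 2),
      (inner ℝ x y : ℝ) = x 0 * y 0 + x 1 * y 1 := by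
    intro x y
    simp [PiLp.inner_apply, Fin.sum_univ_two, RCLike.inner_apply, mul_comm]
  have hsub : ∀ (a b : EuclideanSpace ℝ (Fin 2)) (i : Fin 2), (a - b) i = a i - b i :=
    fun a b i => rfl
  set u0 := xp 0 - xr 0 with hu0
  set u1 := xp 1 - xr 1 with hu1
  set v0 := xq 0 - xr 0 with hv0
  set v1 := xq 1 - xr 1 with hv1
  have e1 : (inner ℝ gp xp : ℝ) + kp = 1 := by rw [← hφp xp]; exact hpp
  have e2 : (inner ℝ gp xq : ℝ) + kp = 0 := by rw [← hφp xq]; exact hpq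
  have e3 : (inner ℝ gp xr : ℝ) + kp = 0 := by rw [← hφp xr]; exact hpr
  have e4 : (inner ℝ gq xq : ℝ) + kq = 1 := by rw [← hφq xq]; exact hqq
  have e5 : (inner ℝ gq xp : ℝ) + kq = 0 := by rw [← hφq xp]; exact hqp
  have e6 : (inner ℝ gq xr : ℝ) + kq = 0 := by rw [← hφq xr]; exact hqr
  rw [inner2] at e1 e2 e3 e4 e5 e6
  have h1 : gp 0 * u0 + gp 1 * u1 = 1 := by rw [hu0, hu1]; linarith
  have h2 : gp 0 * v0 + gp 1 * v1 = 0 := by rw [hv0, hv1]; linarith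
  have h3 : gq 0 * u0 + gq 1 * u1 = 0 := by rw [hu0, hu1]; linarith
  have h4 : gq 0 * v0 + gq 1 * v1 = 1 := by rw [hv0, hv1]; linarith
  set D : ℝ := u0 * v1 - u1 * v0 with hDdef
  have hD : D ≠ 0 := by
    intro h0
    have h5 : (1 : ℝ) = (gp 0 * gq 1 - gp 1 * gq 0) * D := by
      linear_combination (-(gq 0 * v0) - gq 1 * v1) * h1 - h4 + (gq 0 * u0 + gq 1 * u1) * h2
    rw [h0, mul_zero] at h5
    exact one_ne_zero h5
  have hp0 : gp 0 * D = v1 := by linear_combination v1 * h1 - u1 * h2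
  have hp1 : gp 1 * D = -v0 := by linear_combination (-v0) * h1 + u0 * h2
  have hq0 : gq 0 * D = -u1 := by linear_combination (-u1) * h4 + v1 * h3
  have hq1 : gq 1 * D = u0 := by linear_combination u0 * h4 - v0 * h3
  set I : ℝ := u0 * v0 + u1 * v1 with hIdef
  have hgg : (inner ℝ gp gq : ℝ) = -I / D ^ 2 := by
    rw [inner2, eq_div_iff (pow_ne_zero 2 hD)]
    linear_combination (gq 0 * D) * hp0 + v1 * hq0 + (gq 1 * D) * hp1 + (-v0) * hq1
  obtain ⟨u, hu⟩ : ∃ w : EuclideanSpace ℝ (Fin 2), w = xp - xr := ⟨_, rfl⟩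
  obtain ⟨v, hv⟩ : ∃ w : EuclideanSpace ℝ (Fin 2), w = xq - xr := ⟨_, rfl⟩
  have hiu : (inner ℝ u u : ℝ) = u0 ^ 2 + u1 ^ 2 := by
    rw [inner2, hu, hsub, hsub, ← hu0, ← hu1]; ring
  have hiv : (inner ℝ v v : ℝ) = v0 ^ 2 + v1 ^ 2 := by
    rw [inner2, hv, hsub, hsub, ← hv0, ← hv1]; ring
  have hiuv : (inner ℝ u v : ℝ) = I := by
    rw [inner2, hu, hv, hIdef, hu0, hu1, hv0, hv1]
    simp only [hsub]
    try ring
  have hnu2 : ‖u‖ ^ 2 = u0 ^ 2 + u1 ^ 2 := by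
    rw [← real_inner_self_eq_norm_sq]; exact hiu
  have hnv2 : ‖v‖ ^ 2 = v0 ^ 2 + v1 ^ 2 := by
    rw [← real_inner_self_eq_norm_sq]; exact hiv
  have hangle : EuclideanGeometry.angle xp xr xq = InnerProductGeometry.angle u v := by
    rw [EuclideanGeometry.angle]
    congr 1
    · exact (vsub_eq_sub _ _).trans hu.symm
    · exact (vsub_eq_sub _ _).trans hv.symm
  have habs : (xq 0 - xp 0) * (xr 1 - xp 1) - (xq 1 - xp 1) * (xr 0 - xp 0) = D := by
    rw [hDdef, hu0, hu1, hv0, hv1]; ring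
  have habsD : 0 < |D| := abs_pos.mpr hD
  have huz : u0 ≠ 0 ∨ u1 ≠ 0 := by
    by_contra h
    push_neg at h
    exact hD (by rw [hDdef, h.1, h.2]; ring)
  have hvz : v0 ≠ 0 ∨ v1 ≠ 0 := by
    by_contra h
    push_neg at h
    exact hD (by rw [hDdef, h.1, h.2]; ring)
  have hupos : 0 < u0 ^ 2 + u1 ^ 2 := by rcases huz with h | h <;> positivity
  have hvpos : 0 < v0 ^ 2 + v1 ^ 2 := by rcases hvz with h | h <;> positivity
  have hnu : 0 < ‖u‖ := by
    have h0 : ‖u‖ ≠ 0 := by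
      intro h0
      rw [h0, zero_pow two_ne_zero] at hnu2
      linarith [hupos]
    exact (norm_nonneg u).lt_of_ne' h0
  have hnv : 0 < ‖v‖ := by
    have h0 : ‖v‖ ≠ 0 := by
      intro h0
      rw [h0, zero_pow two_ne_zero] at hnv2
      linarith [hvpos]
    exact (norm_nonneg v).lt_of_ne' h0
  have hnuv : 0 < ‖u‖ * ‖v‖ := mul_pos hnu hnv
  have hsin : Real.sin (InnerProductGeometry.angle u v) * (‖u‖ * ‖v‖) = |D| := by
    rw [InnerProductGeometry.sin_angle_mul_norm_mul_norm, hiu, hiv, hiuv]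
    have h5 : (u0 ^ 2 + u1 ^ 2) * (v0 ^ 2 + v1 ^ 2) - I * I = D ^ 2 := by
      rw [hIdef, hDdef]; ring
    rw [h5, Real.sqrt_sq_eq_abs]
  have hcos : Real.cos (InnerProductGeometry.angle u v) * (‖u‖ * ‖v‖) = I := by
    rw [InnerProductGeometry.cos_angle_mul_norm_mul_norm, hiuv]
  have hsinpos : 0 < Real.sin (InnerProductGeometry.angle u v) := by
    rcases lt_or_ge 0 (Real.sin (InnerProductGeometry.angle u v)) with h | h
    · exact h
    · exfalso
      have h2 : Real.sin (InnerProductGeometry.angle u v) * (‖u‖ * ‖v‖) ≤ 0 :=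
        mul_nonpos_iff.mpr (Or.inr ⟨h, hnuv.le⟩)
      rw [hsin] at h2
      linarith [habsD]
  have hcot : Real.cot (InnerProductGeometry.angle u v) = I / |D| := by
    rw [Real.cot_eq_cos_div_sin, div_eq_div_iff hsinpos.ne' habsD.ne']
    have key : (‖u‖ * ‖v‖) * (Real.cos (InnerProductGeometry.angle u v) * |D|)
        = (‖u‖ * ‖v‖) * (I * Real.sin (InnerProductGeometry.angle u v)) := by
      linear_combination |D| * hcos - I * hsin
    exact mul_left_cancel₀ hnuv.ne' key
  rw [hangle, hcot, habs, hgg]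
  have hD2 : D ^ 2 = |D| ^ 2 := (sq_abs D).symm
  rw [hD2]
  obtain ⟨J, hJ⟩ : ∃ w : ℝ, w = I := ⟨_, rfl⟩
  obtain ⟨A, hA⟩ : ∃ w : ℝ, w = |D| := ⟨_, rfl⟩
  rw [← hJ, ← hA]
  have hA0 : A ≠ 0 := by rw [hA]; exact habsD.ne'
  field_simp
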